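/- Fix N ≥ 1 and let Ĥ_N denote the span of {v_1, …, v_N, w_1, …, w_N}. Then B_N is a frame of H (for some bounds 0 < A ≤ B) if and only if for every f ∈ Ĥ_N with ‖f‖ = 1 one has Σ_{j=1}^N (|⟨f,w_j⟩|² − |⟨f,v_j⟩|²) + 1 > 0. Moreover, in that case the optimal frame bounds of B_N are the maximum and the minimum of the functional f ↦ Σ_{j=1}^N (|⟨f,w_j⟩|² − |⟨f,v_j⟩|²) + 1 over {f ∈ Ĥ_N : ‖f‖ = 1}. -/

import Mathlib

open scoped BigOperators ComplexConjugate
open Submodule Filter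

noncomputable section

local notation "⟪" x ", " y "⟫" => @inner ℂ _ _ x y

variable {H : Type*} [NormedAddCommGroup H] [InnerProductSpace ℂ H] [CompleteSpace H]

/-- `u` is a frame of `H` with frame bounds `A ≤ B`. -/
def IsFrame (u : ℕ → H) (A B : ℝ) : Prop :=
  0 < A ∧ A ≤ B ∧ ∀ f : H,
    Summable (fun j => ‖⟪f, u j⟫‖ ^ 2) ∧
    A * ‖f‖ ^ 2 ≤ (∑' j, ‖⟪f, u j⟫‖ ^ 2) ∧ (∑' j, ‖⟪f, u j⟫‖ ^ 2) ≤ B * ‖f‖ ^ 2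

/-- `u` is a Riesz sequence in `H` with bounds `A ≤ B`. -/
def IsRieszSeq (u : ℕ → H) (A B : ℝ) : Prop :=
  0 < A ∧ A ≤ B ∧ ∀ (s : Finset ℕ) (c : ℕ → ℂ),
    A * ∑ j ∈ s, ‖c j‖ ^ 2 ≤ ‖∑ j ∈ s, c j • u j‖ ^ 2 ∧
    ‖∑ j ∈ s, c j • u j‖ ^ 2 ≤ B * ∑ j ∈ s, ‖c j‖ ^ 2

/-- A Riesz basis of `H` with frame constants `A ≤ B` is simultaneously a frame and a
Riesz sequence with those bounds. -/
def IsRieszBasis (u : ℕ → H) (A B : ℝ) : Prop := IsFrame u A B ∧ IsRieszSeq u A B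

/-- Optimal frame constants of a Riesz basis: the largest `A` and the smallest `B`. -/
def OptimalRieszConstants (u : ℕ → H) (A B : ℝ) : Prop :=
  IsRieszBasis u A B ∧ ∀ A' B' : ℝ, IsRieszBasis u A' B' → A' ≤ A ∧ B ≤ B'

/-- Optimal frame bounds of a frame: the largest `A` and the smallest `B`. -/
def OptimalFrameBounds (u : ℕ → H) (A B : ℝ) : Prop :=
  IsFrame u A B ∧ ∀ A' B' : ℝ, IsFrame u A' B' → A' ≤ A ∧ B ≤ B'

/-- The sequence `B_N`: the first `N` vectors of `v` are replaced by those of `w`. -/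
def BNseq (w v : ℕ → H) (N : ℕ) : ℕ → H := fun j => if j < N then w j else v j

/-- The orthogonal projection `p'_N` onto `H'_N = span {v_0, …, v_{N-1}}`
(for an orthonormal family `v`). -/
def pproj (v : ℕ → H) (N : ℕ) (u : H) : H := ∑ j ∈ Finset.range N, ⟪v j, u⟫ • v j

/-- The sequence `B̃_N`: the projections `p'_N (w_j)` for `j < N`, followed by the `v_j`. -/
def BtNseq (w v : ℕ → H) (N : ℕ) : ℕ → H := fun j => if j < N then pproj v N (w j) else v j

/-- The `N × N` matrix `U'_N` with (paper-convention) entries `⟨p'_N w_i, p'_N w_j⟩`;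
here stated with Mathlib's inner product, conjugate-linear in the first slot. -/
def Umat' (v w : ℕ → H) (N : ℕ) : Matrix (Fin N) (Fin N) ℂ :=
  Matrix.of fun i j => ⟪pproj v N (w (j : ℕ)), pproj v N (w (i : ℕ))⟫

/-- The `N × N` matrix `U''_N` with (paper-convention) entries `⟨p''_N w_i, p''_N w_j⟩`,
where `p''_N u = u - p'_N u`. -/
def Umat'' (v w : ℕ → H) (N : ℕ) : Matrix (Fin N) (Fin N) ℂ :=
  Matrix.of fun i j =>
    ⟪w (j : ℕ) - pproj v N (w (j : ℕ)), w (i : ℕ) - pproj v N (w (i : ℕ))⟫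

/-- The quadratic form `⟨U c, c⟩ = ∑_{i,j} U_{i,j} c_i conj (c_j)` (real part). -/
def quadForm {N : ℕ} (U : Matrix (Fin N) (Fin N) ℂ) (c : Fin N → ℂ) : ℝ :=
  (∑ i, ∑ j, U i j * c i * conj (c j)).re

/-- The matrix `M_N` with (paper-convention) entries `⟨w_j, v_k⟩`. -/
def Mmat (v w : ℕ → H) (N : ℕ) : Matrix (Fin N) (Fin N) ℂ :=
  Matrix.of fun j k => ⟪v (k : ℕ), w (j : ℕ)⟫

/-- The quantity `∑_{j ≤ N} |⟨f, w_j⟩|² + ∑_{j > N} |⟨f, v_j⟩|²`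
(the squared norm of the analysis operator of `B_N` applied to `f`). -/
def frameFun (v w : ℕ → H) (N : ℕ) (f : H) : ℝ :=
  (∑ j ∈ Finset.range N, ‖⟪f, w j⟫‖ ^ 2) + ∑' j : {j : ℕ // N ≤ j}, ‖⟪f, v (j : ℕ)⟫‖ ^ 2

/-- The quantity `∑_{j ≤ N} |⟨f, p'_N w_j⟩|² + ∑_{j > N} |⟨f, v_j⟩|²`
(the squared norm of the analysis operator of `B̃_N` applied to `f`). -/
def frameFunT (v w : ℕ → H) (N : ℕ) (f : H) : ℝ :=
  (∑ j ∈ Finset.range N, ‖⟪f, pproj v N (w j)⟫‖ ^ 2) +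
    ∑' j : {j : ℕ // N ≤ j}, ‖⟪f, v (j : ℕ)⟫‖ ^ 2

/-- The quadratic functional. -/
def Qf (v w : ℕ → H) (N : ℕ) (f : H) : ℝ :=
  ∑ j ∈ Finset.range N, (‖⟪f, w j⟫‖ ^ 2 - ‖⟪f, v j⟫‖ ^ 2)

lemma myParseval (v : ℕ → H) (hv : Orthonormal ℂ v)
    (hv_top : (span ℂ (Set.range v)).topologicalClosure = ⊤) (f : H) :
    HasSum (fun j => ‖⟪f, v j⟫‖ ^ 2) (‖f‖ ^ 2) := by
  set b : HilbertBasis ℕ ℂ H := HilbertBasis.mk hv (by rw [hv_top]) with hb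
  have hbv : ∀ j, b j = v j := by
    intro j; rw [hb]; exact congrFun (HilbertBasis.coe_mk hv _) j
  have h := (b.hasSum_inner_mul_inner f f).mapL (Complex.reCLM)
  have h1 : ∀ j, Complex.reCLM (⟪f, b j⟫ * ⟪b j, f⟫) = ‖⟪f, v j⟫‖ ^ 2 := by
    intro j
    rw [hbv j, ← inner_conj_symm (v j) f, Complex.mul_conj]
    simp [Complex.normSq_eq_norm_sq, ← Complex.ofReal_pow]
  have h2 : Complex.reCLM ⟪f, f⟫ = ‖f‖ ^ 2 := by
    simpa using inner_self_eq_norm_sq (𝕜 := ℂ) f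
  rw [h2] at h
  exact h.congr_fun fun j => (h1 j).symm

lemma keyIdentity (v w : ℕ → H) (hv : Orthonormal ℂ v)
    (hv_top : (span ℂ (Set.range v)).topologicalClosure = ⊤) (N : ℕ) (f : H) :
    HasSum (fun j => ‖⟪f, BNseq w v N j⟫‖ ^ 2) (‖f‖ ^ 2 + Qf v w N f) := by
  have hps := myParseval v hv hv_top f
  have hd : ∀ j ∉ Finset.range N,
      (fun j => ‖⟪f, BNseq w v N j⟫‖ ^ 2 - ‖⟪f, v j⟫‖ ^ 2) j = 0 := by
    intro j hj
    have : ¬ j < N := by simpa using hj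
    simp [BNseq, this]
  have hsd : HasSum _ _ := hasSum_sum_of_ne_finset_zero hd
  have hsum : (∑ j ∈ Finset.range N, (‖⟪f, BNseq w v N j⟫‖ ^ 2 - ‖⟪f, v j⟫‖ ^ 2))
      = Qf v w N f := by
    refine Finset.sum_congr rfl fun j hj => ?_
    have : j < N := Finset.mem_range.mp hj
    simp [BNseq, this]
  rw [hsum] at hsd
  simpa using hps.add hsd

lemma inner_projEq {K : Submodule ℂ H} [CompleteSpace K] (f : H) {u : H}
    (hu : u ∈ K) : ⟪f, u⟫ = ⟪(orthogonalProjection K f : H), u⟫ := by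
  have h := sub_starProjection_mem_orthogonal (K := K) f
  have h0 : ⟪u, f - orthogonalProjection K f⟫ = 0 :=
    (Submodule.mem_orthogonal K _).mp h u hu
  have h0' : ⟪f - (orthogonalProjection K f : H), u⟫ = 0 := by
    have hc := congrArg (starRingEnd ℂ) h0
    rw [inner_conj_symm] at hc
    simpa [inner_sub_left] using hc
  have := inner_sub_left (𝕜 := ℂ) f (orthogonalProjection K f : H) u
  rw [h0'] at this
  linear_combination -this

lemma onbParseval {K : Submodule ℂ H} [FiniteDimensional ℂ K]
    {ι : Type*} [Fintype ι] (b : OrthonormalBasis ι ℂ K) {u : H} (hu : u ∈ K) :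
    ∑ k, ‖⟪u, (b k : H)⟫‖ ^ 2 = ‖u‖ ^ 2 := by
  set u' : K := ⟨u, hu⟩ with hu'
  have h := b.sum_inner_mul_inner u' u'
  have h1 : ∀ k, (⟪u', b k⟫ * ⟪b k, u'⟫).re = ‖⟪u, (b k : H)⟫‖ ^ 2 := by
    intro k
    have hc : (⟪u', b k⟫ : ℂ) = ⟪u, (b k : H)⟫ := rfl
    rw [← inner_conj_symm (b k) u', Complex.mul_conj, hc]
    simp [Complex.normSq_eq_norm_sq, ← Complex.ofReal_pow]
  have h2 : (⟪u', u'⟫ : ℂ).re = ‖u‖ ^ 2 := by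
    have := inner_self_eq_norm_sq (𝕜 := ℂ) u'
    simpa [hu'] using this
  calc ∑ k, ‖⟪u, (b k : H)⟫‖ ^ 2 = ∑ k, (⟪u', b k⟫ * ⟪b k, u'⟫).re := by
        exact Finset.sum_congr rfl fun k _ => (h1 k).symm
    _ = (⟪u', u'⟫ : ℂ).re := by rw [← Complex.re_sum]; exact congrArg Complex.re h
    _ = ‖u‖ ^ 2 := h2

lemma Qf_smul (v w : ℕ → H) (N : ℕ) (c : ℂ) (g : H) :
    Qf v w N (c • g) = ‖c‖ ^ 2 * Qf v w N g := by
  unfold Qf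
  rw [Finset.mul_sum]
  refine Finset.sum_congr rfl fun j _ => ?_
  rw [inner_smul_left, inner_smul_left]
  simp only [norm_mul, mul_pow, RCLike.norm_conj]
  ring

lemma Qf_cont (v w : ℕ → H) (N : ℕ) (K : Submodule ℂ H) :
    Continuous fun g : K => Qf v w N (g : H) + 1 := by
  refine Continuous.add ?_ continuous_const
  refine continuous_finset_sum _ fun j _ => Continuous.sub ?_ ?_
  · exact ((Continuous.inner continuous_subtype_val continuous_const).norm.pow 2)
  · exact ((Continuous.inner continuous_subtype_val continuous_const).norm.pow 2)

set_option maxHeartbeats 2000000 in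
theorem statement3 (v w : ℕ → H) (hv : Orthonormal ℂ v)
    (hv_top : (span ℂ (Set.range v)).topologicalClosure = ⊤)
    (hw : ∀ j, ‖w j‖ = 1)
    (N : ℕ) (hN : 1 ≤ N) :
    ((∃ A B : ℝ, IsFrame (BNseq w v N) A B) ↔
      ∀ f ∈ span ℂ (v '' Set.Iio N ∪ w '' Set.Iio N), ‖f‖ = 1 →
        0 < (∑ j ∈ Finset.range N, (‖⟪f, w j⟫‖ ^ 2 - ‖⟪f, v j⟫‖ ^ 2)) + 1) ∧
    ((∃ A B : ℝ, IsFrame (BNseq w v N) A B) →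
      ∃ A B : ℝ, OptimalFrameBounds (BNseq w v N) A B ∧
        IsLeast {x : ℝ | ∃ f ∈ span ℂ (v '' Set.Iio N ∪ w '' Set.Iio N), ‖f‖ = 1 ∧
          x = (∑ j ∈ Finset.range N, (‖⟪f, w j⟫‖ ^ 2 - ‖⟪f, v j⟫‖ ^ 2)) + 1} A ∧
        IsGreatest {x : ℝ | ∃ f ∈ span ℂ (v '' Set.Iio N ∪ w '' Set.Iio N), ‖f‖ = 1 ∧
          x = (∑ j ∈ Finset.range N, (‖⟪f, w j⟫‖ ^ 2 - ‖⟪f, v j⟫‖ ^ 2)) + 1} B) := by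
  classical
  set K : Submodule ℂ H := span ℂ (v '' Set.Iio N ∪ w '' Set.Iio N) with hK
  haveI hfin : FiniteDimensional ℂ K :=
    FiniteDimensional.span_of_finite ℂ
      (((Set.finite_Iio N).image v).union ((Set.finite_Iio N).image w))
  haveI : CompleteSpace K := FiniteDimensional.complete ℂ K
  have hvK : ∀ j, j < N → v j ∈ K := fun j hj => subset_span (Or.inl ⟨j, hj, rfl⟩)
  have hwK : ∀ j, j < N → w j ∈ K := fun j hj => subset_span (Or.inr ⟨j, hj, rfl⟩)
  have key : ∀ f : H, HasSum (fun j => ‖⟪f, BNseq w v N j⟫‖ ^ 2) (‖f‖ ^ 2 + Qf v w N f) :=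
    keyIdentity v w hv hv_top N
  have hQshow : ∀ f : H,
      (∑ j ∈ Finset.range N, (‖⟪f, w j⟫‖ ^ 2 - ‖⟪f, v j⟫‖ ^ 2)) = Qf v w N f :=
    fun _ => rfl
  -- forward direction
  have fwd : (∃ A B : ℝ, IsFrame (BNseq w v N) A B) →
      ∀ f ∈ K, ‖f‖ = 1 → 0 < Qf v w N f + 1 := by
    rintro ⟨A, B, hA, _, hfr⟩ f _ hf1
    have h := (hfr f).2.1
    rw [(key f).tsum_eq, hf1] at h
    nlinarith
  -- the main construction under the positivity hypothesis
  have main : (∀ f ∈ K, ‖f‖ = 1 → 0 < Qf v w N f + 1) →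
      ∃ A B : ℝ, OptimalFrameBounds (BNseq w v N) A B ∧
        IsLeast {x : ℝ | ∃ f ∈ K, ‖f‖ = 1 ∧ x = Qf v w N f + 1} A ∧
        IsGreatest {x : ℝ | ∃ f ∈ K, ‖f‖ = 1 ∧ x = Qf v w N f + 1} B := by
    intro hpos
    have hv0 : ‖v 0‖ = 1 := hv.1 0
    have hv0K : v 0 ∈ K := hvK 0 hN
    have hSc : IsCompact (Metric.sphere (0 : K) 1) := isCompact_sphere 0 1
    have hSne : (Metric.sphere (0 : K) 1).Nonempty := by
      refine ⟨⟨v 0, hv0K⟩, ?_⟩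
      rw [mem_sphere_zero_iff_norm]
      simpa using hv0
    have hqc := Qf_cont v w N K
    obtain ⟨g₀, hg₀S, hg₀min⟩ := hSc.exists_isMinOn hSne hqc.continuousOn
    obtain ⟨g₁, hg₁S, hg₁max⟩ := hSc.exists_isMaxOn hSne hqc.continuousOn
    have hmin : ∀ x ∈ Metric.sphere (0 : K) 1,
        Qf v w N (g₀ : H) + 1 ≤ Qf v w N (x : H) + 1 := fun x hx => isMinOn_iff.mp hg₀min x hx
    have hmax : ∀ x ∈ Metric.sphere (0 : K) 1,
        Qf v w N (x : H) + 1 ≤ Qf v w N (g₁ : H) + 1 := fun x hx => isMaxOn_iff.mp hg₁max x hx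
    set A := Qf v w N (g₀ : H) + 1 with hA
    set B := Qf v w N (g₁ : H) + 1 with hB
    have hg₀n : ‖(g₀ : H)‖ = 1 := by
      have := mem_sphere_zero_iff_norm.mp hg₀S; simpa using this
    have hg₁n : ‖(g₁ : H)‖ = 1 := by
      have := mem_sphere_zero_iff_norm.mp hg₁S; simpa using this
    have hApos : 0 < A := hpos _ g₀.2 hg₀n
    have hAleB : A ≤ B := hmax g₀ hg₀S
    -- homogeneous bounds on K
    have hball : ∀ g : K, A * ‖(g : H)‖ ^ 2 ≤ Qf v w N (g : H) + ‖(g : H)‖ ^ 2 ∧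
        Qf v w N (g : H) + ‖(g : H)‖ ^ 2 ≤ B * ‖(g : H)‖ ^ 2 := by
      intro g
      by_cases hg : (g : H) = 0
      · rw [hg]; unfold Qf; simp
      · set t : ℝ := ‖(g : H)‖ with ht'
        have ht : 0 < t := norm_pos_iff.mpr hg
        set u : K := ((t⁻¹ : ℂ)) • g with hu
        have hcoe : (u : H) = ((t⁻¹ : ℝ) : ℂ) • (g : H) := by rw [hu]; simp
        have hun : ‖(u : H)‖ = 1 := by
          rw [hcoe, norm_smul, Complex.norm_real, Real.norm_eq_abs,
            abs_of_pos (inv_pos.mpr ht), ← ht']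
          exact inv_mul_cancel₀ ht.ne'
        have huS : u ∈ Metric.sphere (0 : K) 1 := by
          rw [mem_sphere_zero_iff_norm]; simpa using hun
        have h1 : A ≤ Qf v w N (u : H) + 1 := hmin u huS
        have h2 : Qf v w N (u : H) + 1 ≤ B := hmax u huS
        have hQu : Qf v w N (u : H) = (t⁻¹) ^ 2 * Qf v w N (g : H) := by
          rw [hcoe, Qf_smul, Complex.norm_real, Real.norm_eq_abs,
            abs_of_pos (inv_pos.mpr ht)]
        rw [hQu] at h1 h2
        have hinv : t⁻¹ * t = 1 := inv_mul_cancel₀ ht.ne'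
        have he : t⁻¹ ^ 2 * Qf v w N (g : H) * t ^ 2 = Qf v w N (g : H) := by
          field_simp
        constructor <;> nlinarith [he, mul_le_mul_of_nonneg_right h1 (sq_nonneg t),
          mul_le_mul_of_nonneg_right h2 (sq_nonneg t)]
    -- trace bounds : A ≤ 1 ≤ B
    haveI : Nontrivial K := by
      refine ⟨⟨v 0, hv0K⟩, 0, ?_⟩
      intro hcontra
      have : v 0 = 0 := congrArg Subtype.val hcontra
      rw [this] at hv0; simp at hv0
    have hd : 0 < Module.finrank ℂ K := Module.finrank_pos
    set d := Module.finrank ℂ K with hdd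
    set b := stdOrthonormalBasis ℂ K with hbdef
    have hbS : ∀ k, b k ∈ Metric.sphere (0 : K) 1 := fun k =>
      mem_sphere_zero_iff_norm.mpr (b.orthonormal.1 k)
    have htr : ∑ k : Fin d, Qf v w N ((b k : K) : H) = 0 := by
      unfold Qf
      rw [Finset.sum_comm]
      have hterm : ∀ j ∈ Finset.range N,
          (∑ k : Fin d, (‖⟪((b k : K) : H), w j⟫‖ ^ 2 - ‖⟪((b k : K) : H), v j⟫‖ ^ 2)) = 0 := by
        intro j hj
        have hj' := Finset.mem_range.mp hj
        rw [Finset.sum_sub_distrib]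
        have hw' : ∑ k : Fin d, ‖⟪((b k : K) : H), w j⟫‖ ^ 2 = ‖w j‖ ^ 2 := by
          rw [← onbParseval b (hwK j hj')]
          exact Finset.sum_congr rfl fun k _ => by rw [norm_inner_symm]
        have hv' : ∑ k : Fin d, ‖⟪((b k : K) : H), v j⟫‖ ^ 2 = ‖v j‖ ^ 2 := by
          rw [← onbParseval b (hvK j hj')]
          exact Finset.sum_congr rfl fun k _ => by rw [norm_inner_symm]
        rw [hw', hv', hw j, hv.1 j]
        ring
      rw [Finset.sum_congr rfl hterm]
      simp
    have hsum1 : ∑ k : Fin d, (Qf v w N ((b k : K) : H) + 1) = (d : ℝ) := by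
      rw [Finset.sum_add_distrib, htr]
      simp
    have hA1 : A ≤ 1 := by
      have hle : ∑ k : Fin d, A ≤ ∑ k : Fin d, (Qf v w N ((b k : K) : H) + 1) :=
        Finset.sum_le_sum fun k _ => hmin (b k) (hbS k)
      rw [hsum1, Finset.sum_const, Finset.card_univ, Fintype.card_fin, nsmul_eq_mul] at hle
      have hd' : (0 : ℝ) < d := by exact_mod_cast hd
      nlinarith
    have hB1 : 1 ≤ B := by
      have hle : ∑ k : Fin d, (Qf v w N ((b k : K) : H) + 1) ≤ ∑ k : Fin d, B :=
        Finset.sum_le_sum fun k _ => hmax (b k) (hbS k)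
      rw [hsum1, Finset.sum_const, Finset.card_univ, Fintype.card_fin, nsmul_eq_mul] at hle
      have hd' : (0 : ℝ) < d := by exact_mod_cast hd
      nlinarith
    -- frame inequalities for all f
    have hbd : ∀ f : H, A * ‖f‖ ^ 2 ≤ ‖f‖ ^ 2 + Qf v w N f ∧
        ‖f‖ ^ 2 + Qf v w N f ≤ B * ‖f‖ ^ 2 := by
      intro f
      set p : H := (orthogonalProjection K f : H) with hp
      have hQfp : Qf v w N f = Qf v w N p := by
        unfold Qf
        refine Finset.sum_congr rfl fun j hj => ?_
        have hj' := Finset.mem_range.mp hj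
        rw [inner_projEq f (hwK j hj'), inner_projEq f (hvK j hj')]
      have hpn : ‖p‖ ≤ ‖f‖ := by
        rw [hp]
        calc ‖(orthogonalProjection K f : H)‖ = ‖orthogonalProjection K f‖ :=
            Submodule.norm_coe _
          _ ≤ ‖orthogonalProjection K‖ * ‖f‖ := (orthogonalProjection K).le_opNorm f
          _ ≤ 1 * ‖f‖ := by
              have := orthogonalProjection_norm_le K
              exact mul_le_mul_of_nonneg_right this (norm_nonneg f)
          _ = ‖f‖ := one_mul _
      have hpn2 : ‖p‖ ^ 2 ≤ ‖f‖ ^ 2 := by nlinarith [norm_nonneg p, norm_nonneg f]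
      have hb := hball (orthogonalProjection K f)
      rw [← hp] at hb
      constructor <;> nlinarith [hb.1, hb.2]
    -- assemble
    have hfr : IsFrame (BNseq w v N) A B := by
      refine ⟨hApos, hAleB, fun f => ?_⟩
      refine ⟨(key f).summable, ?_, ?_⟩
      · rw [(key f).tsum_eq]; exact (hbd f).1
      · rw [(key f).tsum_eq]; exact (hbd f).2
    have hopt : ∀ A' B' : ℝ, IsFrame (BNseq w v N) A' B' → A' ≤ A ∧ B ≤ B' := by
      rintro A' B' ⟨_, _, hfr'⟩
      have h0 := (hfr' (g₀ : H)).2.1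
      rw [(key _).tsum_eq, hg₀n] at h0
      have h1 := (hfr' (g₁ : H)).2.2
      rw [(key _).tsum_eq, hg₁n] at h1
      constructor <;> [nlinarith; nlinarith]
    refine ⟨A, B, ⟨hfr, hopt⟩, ⟨⟨(g₀ : H), g₀.2, hg₀n, rfl⟩, ?_⟩,
      ⟨(g₁ : H), g₁.2, hg₁n, rfl⟩, ?_⟩
    · rintro x ⟨f, hfK, hfn, rfl⟩
      have hfS : (⟨f, hfK⟩ : K) ∈ Metric.sphere (0 : K) 1 := by
        rw [mem_sphere_zero_iff_norm]; simpa using hfn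
      exact hmin ⟨f, hfK⟩ hfS
    · rintro x ⟨f, hfK, hfn, rfl⟩
      have hfS : (⟨f, hfK⟩ : K) ∈ Metric.sphere (0 : K) 1 := by
        rw [mem_sphere_zero_iff_norm]; simpa using hfn
      exact hmax ⟨f, hfK⟩ hfS
  constructor
  · constructor
    · intro hex f hfK hfn
      rw [hQshow f]
      exact fwd hex f hfK hfn
    · intro hpos
      obtain ⟨A, B, hopt, _, _⟩ := main (by
        intro f hfK hfn
        have := hpos f hfK hfn
        rwa [hQshow f] at this)
      exact ⟨A, B, hopt.1⟩
  · intro hex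
    obtain ⟨A, B, hopt, hleast, hgreat⟩ := main (fwd hex)
    refine ⟨A, B, hopt, ?_, ?_⟩
    · simpa only [hQshow] using hleast
    · simpa only [hQshow] using hgreat


end
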